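/- For every finitely generated group G and every integer r ≥ 1, if every homomorphism from G to GL_r(F) is trivial for all finite fields F, and G admits a homomorphism ρ: G → GL_r(A) into the invertible matrices over a reduced commutative ring A finitely generated as a ℤ-algebra, then ρ is trivial. -/

import Mathlib

open Matrix

set_option maxHeartbeats 1000000

/-- `ℤ` is a Jacobson ring. -/
lemma aux_isJacobsonRing_int : IsJacobsonRing ℤ := by
  rw [isJacobsonRing_iff_prime_eq]
  intro P hP
  by_cases hbot : P = ⊥
  · subst hbot
    refine le_antisymm (fun x hx => ?_) Ideal.le_jacobson
    simp only [Ideal.jacobson, Ideal.mem_sInf] at hx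
    by_contra hx0
    have hx0' : x ≠ 0 := by simpa using hx0
    obtain ⟨p, hple, hp⟩ := Nat.exists_infinite_primes (x.natAbs + 1)
    have hpZ : Prime (p : ℤ) := Int.prime_iff_natAbs_prime.mpr (by simpa using hp)
    haveI hprime : (Ideal.span {(p : ℤ)}).IsPrime :=
      (Ideal.span_singleton_prime (by exact_mod_cast hp.ne_zero)).mpr hpZ
    haveI hmax : (Ideal.span {(p : ℤ)}).IsMaximal :=
      IsPrime.to_maximal_ideal (by
        simp only [ne_eq, Ideal.span_singleton_eq_bot]
        exact_mod_cast hp.ne_zero)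
    have hmem := hx (I := Ideal.span {(p : ℤ)}) ⟨bot_le, hmax⟩
    rw [Ideal.mem_span_singleton] at hmem
    have : (p : ℤ) ≤ |x| := Int.le_of_dvd (abs_pos.mpr hx0') ((dvd_abs _ _).mpr hmem)
    rw [Int.abs_eq_natAbs] at this
    omega
  · haveI := IsPrime.to_maximal_ideal hbot
    exact Ideal.jacobson_eq_self_of_isMaximal

/-- A field that is module-finite over `ℤ` is finite. -/
lemma aux_finite_of_moduleFinite_int (K : Type) [Field K] [Algebra ℤ K]
    (hfin : Module.Finite ℤ K) : Finite K := by
  haveI := hfin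
  haveI hA : @Module.Finite ℤ K _ _ (Algebra.toModule) := by
    letI := AddCommGroup.uniqueIntModule (M := K)
    convert hfin
    · rfl
    · exact Subsingleton.elim _ _
  haveI hint : Algebra.IsIntegral ℤ K := Algebra.IsIntegral.of_finite ℤ K
  -- the characteristic of K is a prime p
  have hp : (ringChar K).Prime := by
    rcases (CharP.char_is_prime_or_zero K (ringChar K)) with h | h
    · exact h
    · exfalso
      haveI : CharP K 0 := h ▸ ringChar.charP K
      haveI : CharZero K := CharP.charP_to_charZero K
      have hinj : Function.Injective (algebraMap ℤ K) := by
        intro a b hab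
        rwa [eq_intCast (algebraMap ℤ K), eq_intCast (algebraMap ℤ K),
          Int.cast_injective.eq_iff] at hab
      exact Int.not_isField (isField_of_isIntegral_of_isField hinj (Field.toIsField K))
  -- K is a torsion ℤ-module
  haveI hI : @Module.Finite ℤ K _ _ (AddCommGroup.toIntModule K) := by
    letI := AddCommGroup.uniqueIntModule (M := K)
    convert hfin <;> exact Subsingleton.elim _ _
  have htor : @Module.IsTorsion ℤ K _ _ (AddCommGroup.toIntModule K) := by
    intro x
    refine ⟨⟨(ringChar K : ℤ), ?_⟩, ?_⟩
    · simp only [mem_nonZeroDivisors_iff_ne_zero, ne_eq, Int.natCast_eq_zero]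
      exact hp.ne_zero
    · show ((ringChar K : ℤ)) • x = 0
      refine (zsmul_eq_mul x ((ringChar K : ℤ))).trans ?_
      push_cast
      rw [CharP.cast_eq_zero K (ringChar K), zero_mul]
  exact @Module.finite_of_fg_torsion K _ (AddCommGroup.toIntModule K) hI htor

/-- The quotient of a finitely generated `ℤ`-algebra by a maximal ideal is finite. -/
lemma aux_quot_finite (A : Type) [CommRing A] [Algebra ℤ A]
    (hfg : Algebra.FiniteType ℤ A) (m : Ideal A) (hm : m.IsMaximal) : Finite (A ⧸ m) := by
  haveI := hm
  haveI : IsJacobsonRing ℤ := aux_isJacobsonRing_int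
  letI : Field (A ⧸ m) := Ideal.Quotient.field m
  haveI hft : Algebra.FiniteType ℤ (A ⧸ m) :=
    Algebra.FiniteType.of_surjective (Ideal.Quotient.mkₐ ℤ m)
      (Ideal.Quotient.mkₐ_surjective ℤ m)
  haveI hMF := finite_of_finite_type_of_isJacobsonRing ℤ (A ⧸ m)
  haveI hMF' : Module.Finite ℤ (A ⧸ m) := by
    letI := AddCommGroup.uniqueIntModule (M := A ⧸ m)
    convert hMF
    · rfl
    · rfl
    · exact Subsingleton.elim _ _
  exact aux_finite_of_moduleFinite_int (A ⧸ m) hMF'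

/-- If all representations of the finitely generated group `G` into `GL r F`
over finite fields are trivial, then so is any representation into `GL r A`
for `A` a reduced finitely generated ℤ-algebra. -/
theorem stmt_15 (G : Type) [Group G] [Group.FG G] (r : ℕ) (hr : 1 ≤ r)
    (hfin : ∀ (F : Type) [Field F] [Finite F] (f : G →* GL (Fin r) F) (g : G),
      f g = 1)
    (A : Type) [CommRing A] [IsReduced A] [Algebra ℤ A]
    (hfg : Algebra.FiniteType ℤ A) (ρ : G →* GL (Fin r) A) :
    ∀ g : G, ρ g = 1 := by
  haveI := hfg
  haveI : IsJacobsonRing ℤ := aux_isJacobsonRing_int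
  haveI : IsJacobsonRing A := isJacobsonRing_of_finiteType (A := ℤ)
  intro g
  -- it suffices to show the underlying matrix is 1
  refine Units.ext (Matrix.ext fun i j => ?_)
  rw [Units.val_one, ← sub_eq_zero]
  -- key: entries of (ρ g - 1) lie in every maximal ideal
  have key : ∀ (m : Ideal A), m.IsMaximal →
      ((ρ g : Matrix (Fin r) (Fin r) A) i j - (1 : Matrix (Fin r) (Fin r) A) i j) ∈ m := by
    intro m hm
    haveI := hm
    have h1 := @hfin (A ⧸ m) (Ideal.Quotient.field m) (aux_quot_finite A hfg m hm)
      ((Matrix.GeneralLinearGroup.map (Ideal.Quotient.mk m : A →+* A ⧸ m)).comp ρ) g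
    have h2 : (Ideal.Quotient.mk m) ((ρ g : Matrix (Fin r) (Fin r) A) i j)
        - (Ideal.Quotient.mk m) ((1 : Matrix (Fin r) (Fin r) A) i j) = 0 := by
      have := congrArg (fun u : GL (Fin r) (A ⧸ m) =>
        ((u : Matrix (Fin r) (Fin r) (A ⧸ m)) i j)) h1
      simp only [MonoidHom.comp_apply] at this
      rw [sub_eq_zero]
      simpa [Matrix.GeneralLinearGroup.map, Matrix.map_apply, Matrix.one_apply,
        apply_ite (Ideal.Quotient.mk m)] using this
    rw [← map_sub] at h2
    exact (Ideal.Quotient.eq_zero_iff_mem).mp h2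
  have hmem : ((ρ g : Matrix (Fin r) (Fin r) A) i j - (1 : Matrix (Fin r) (Fin r) A) i j)
      ∈ (⊥ : Ideal A).jacobson := by
    rw [Ideal.jacobson]
    exact Ideal.mem_sInf.mpr (fun {J} hJ => key J hJ.2)
  rw [← Ideal.radical_eq_jacobson, Ideal.mem_radical_iff] at hmem
  obtain ⟨n, hn⟩ := hmem
  exact IsReduced.eq_zero _ ⟨n, by simpa using hn⟩
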